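/- If the skew shape μ/ν sits inside κ/λ, then every SSYT T of shape κ/λ with entries in {1,...,n} factors as T = T' ⊠ T'' where T' is an SSYT of shape μ/ν and T'' is an SSYT of shape (κ−μ)/(λ−ν). -/

import Mathlib

open scoped BigOperators

/-- A partition: a weakly decreasing sequence of naturals that is eventually zero. -/
def IsPartition (f : ℕ → ℕ) : Prop :=
  (∀ i j, i ≤ j → f j ≤ f i) ∧ ∃ N, ∀ i, N ≤ i → f i = 0

/-- Data of a (skew) filling with entries bounded by `n`: the inner shape `inner`, and for
each row the weakly increasing list of its entries.  The outer shape of the filling is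
`inner i + (row i).length`, so skew boxes sit to the left of all entries of a row. -/
structure SkewTab (n : ℕ) where
  inner : ℕ → ℕ
  row : ℕ → List ℕ

namespace SkewTab

variable {n : ℕ}

/-- The outer shape. -/
def outer (T : SkewTab n) : ℕ → ℕ := fun i => T.inner i + (T.row i).length

/-- The entry in row `i`, column `j` (0-indexed); meaningful for `inner i ≤ j < outer i`. -/
def entry (T : SkewTab n) (i j : ℕ) : ℕ := (T.row i).getD (j - T.inner i) 0

/-- `T` is a semistandard Young tableau of skew shape `outer/inner` with entries in
`{1,…,n}`: both shapes are partitions, rows are weakly increasing and columns are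
strictly increasing. -/
def IsSSYT (T : SkewTab n) : Prop :=
  IsPartition T.inner ∧ IsPartition T.outer ∧
  (∀ i, (T.row i).Pairwise (· ≤ ·)) ∧
  (∀ i, ∀ x ∈ T.row i, 1 ≤ x ∧ x ≤ n) ∧
  (∀ i j, T.inner i ≤ j → j < T.outer i → T.inner (i+1) ≤ j → j < T.outer (i+1) →
    T.entry i j < T.entry (i+1) j)

/-- Tableau insertion `T1 ⊠ T2`: concatenate corresponding rows and sort each row
weakly increasingly; the skew boxes (inner shapes) add up and are pushed to the left,
i.e. treated as smaller than all numbered entries. -/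
def ins (T1 T2 : SkewTab n) : SkewTab n where
  inner := fun i => T1.inner i + T2.inner i
  row := fun i => (T1.row i ++ T2.row i).mergeSort (fun a b => decide (a ≤ b))

/-- The empty tableau. -/
def empty : SkewTab n := ⟨fun _ => 0, fun _ => []⟩

/-- The weight of `T`: `wt T k` is the number of boxes with entry `k`. -/
noncomputable def wt (T : SkewTab n) (k : ℕ) : ℕ := ∑ᶠ i, (T.row i).count k

/-- The `c`-th column of `T` (0-indexed), viewed as a single-column skew tableau
(keeping its skew boxes). -/
def col (T : SkewTab n) (c : ℕ) : SkewTab n where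
  inner := fun i => if c < T.inner i then 1 else 0
  row := fun i =>
    if T.inner i ≤ c ∧ c < T.outer i then [(T.row i).getD (c - T.inner i) 0] else []

end SkewTab

/-- The set of SSYTs of shape `mu/nu` with entries in `{1,…,n}`. -/
def Tabs (n : ℕ) (mu nu : ℕ → ℕ) : Set (SkewTab n) :=
  {T | T.IsSSYT ∧ T.inner = nu ∧ T.outer = mu}

/-- The monomial `x^w = x₁^{w₁} ⋯ xₙ^{wₙ}`. -/
noncomputable def xpow (n : ℕ) (w : Fin n → ℕ) : MvPolynomial (Fin n) ℤ :=
  ∏ k : Fin n, MvPolynomial.X k ^ w k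

/-- The monomial `x^{w(T)}` attached to a tableau `T` (variable `x_k` corresponds to
the entry `k ∈ {1,…,n}`). -/
noncomputable def xwt {n : ℕ} (T : SkewTab n) : MvPolynomial (Fin n) ℤ :=
  xpow n (fun k => T.wt ((k : ℕ) + 1))

/-- The skew Schur polynomial `s_{mu/nu}(x₁,…,xₙ) = Σ_T x^{w(T)}`. -/
noncomputable def schur (n : ℕ) (mu nu : ℕ → ℕ) : MvPolynomial (Fin n) ℤ :=
  ∑ᶠ T ∈ Tabs n mu nu, xwt T

/-- The Kostka number `K_{lam/mu,w}`: the number of SSYTs of shape `lam/mu` with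
entries in `{1,…,n}` and weight `w`. -/
noncomputable def kostka (n : ℕ) (lam mu : ℕ → ℕ) (w : Fin n → ℕ) : ℕ :=
  Nat.card {T : SkewTab n // T ∈ Tabs n lam mu ∧ ∀ k : Fin n, T.wt ((k : ℕ) + 1) = w k}

/-- The monomial symmetric polynomial `m_w`: the sum of `x^u` over the distinct
rearrangements `u` of `w`. -/
noncomputable def mSym (n : ℕ) (w : Fin n → ℕ) : MvPolynomial (Fin n) ℤ :=
  ∑ᶠ u ∈ {u : Fin n → ℕ | ∃ σ : Equiv.Perm (Fin n), u = w ∘ σ}, xpow n u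

/-- The characteristic polynomial `χ(t) = ∏_{T ∈ T^n_{mu/nu}} (t − x^{w(T)})`. -/
noncomputable def charPoly (n : ℕ) (mu nu : ℕ → ℕ) : Polynomial (MvPolynomial (Fin n) ℤ) :=
  ∏ᶠ T ∈ Tabs n mu nu, (Polynomial.X - Polynomial.C (xwt T))

/-- `mu/nu` sits inside `alpha/beta`: there is an injection `f` of column positions such
that for every row, column `j` of `mu/nu` has a cell (resp. a skew box) exactly when
column `f j` of `alpha/beta` does; i.e. every column of the diagram of `mu/nu` can be
found among the columns of the diagram of `alpha/beta`, counting multiplicities. -/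
def SitsInside (mu nu alpha beta : ℕ → ℕ) : Prop :=
  ∃ f : ℕ → ℕ, Function.Injective f ∧
    ∀ j i, ((nu i ≤ j ∧ j < mu i) ↔ (beta i ≤ f j ∧ f j < alpha i)) ∧
      (j < nu i ↔ f j < beta i)

private lemma auxMergeSortSorted (l : List ℕ) :
    (l.mergeSort (fun a b => decide (a ≤ b))).Pairwise (· ≤ ·) := by
  have h := List.pairwise_mergeSort (le := fun a b : ℕ => decide (a ≤ b))
    (fun a b c hab hbc => by simp only [decide_eq_true_eq] at *; omega)
    (fun a b => by simp only [Bool.or_eq_true, decide_eq_true_eq]; omega) l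
  exact h.imp (fun hx => by simpa using hx)

private lemma auxSortedGetElemLe {l : List ℕ} (h : l.Pairwise (· ≤ ·)) {i j : ℕ}
    (hij : i ≤ j) (hj : j < l.length) : l[i]'(lt_of_le_of_lt hij hj) ≤ l[j] := by
  rcases eq_or_lt_of_le hij with rfl | hlt
  · exact le_refl _
  · exact List.pairwise_iff_getElem.mp h i j _ hj hlt

private lemma auxCountLt {l : List ℕ} (h : l.Pairwise (· ≤ ·)) {a : ℕ}
    (ha : a < l.length) {v : ℕ}
    (hcount : a + 1 ≤ l.countP (fun x => decide (x < v))) : l[a] < v := by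
  by_contra hv
  push_neg at hv
  have hsplit : l.countP (fun x => decide (x < v)) =
      (l.take a).countP (fun x => decide (x < v)) +
      (l.drop a).countP (fun x => decide (x < v)) := by
    rw [← List.countP_append, List.take_append_drop]
  have h0 : (l.drop a).countP (fun x => decide (x < v)) = 0 := by
    rw [List.countP_eq_zero]
    intro x hx
    obtain ⟨i, hi, rfl⟩ := List.mem_iff_getElem.mp hx
    rw [List.getElem_drop]
    have hlen : a + i < l.length := by
      have := (List.length_drop (i := a) (l := l)) ▸ hi; omega
    have := auxSortedGetElemLe h (Nat.le_add_right a i) hlen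
    simp only [decide_eq_true_eq, not_lt]
    omega
  have h1 : (l.take a).countP (fun x => decide (x < v)) ≤ a := by
    calc (l.take a).countP (fun x => decide (x < v)) ≤ (l.take a).length :=
      List.countP_le_length
    _ ≤ a := by simp [List.length_take]
  omega

private lemma auxCountGt {l : List ℕ} (h : l.Pairwise (· ≤ ·)) {b : ℕ}
    (hb : b < l.length) : l.countP (fun x => decide (l[b] < x)) + b + 1 ≤ l.length := by
  have hsplit : l.countP (fun x => decide (l[b] < x)) =
      (l.take (b+1)).countP (fun x => decide (l[b] < x)) +
      (l.drop (b+1)).countP (fun x => decide (l[b] < x)) := by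
    rw [← List.countP_append, List.take_append_drop]
  have h0 : (l.take (b+1)).countP (fun x => decide (l[b] < x)) = 0 := by
    rw [List.countP_eq_zero]
    intro x hx
    obtain ⟨i, hi, rfl⟩ := List.mem_iff_getElem.mp hx
    rw [List.getElem_take]
    have hi' : i < b + 1 := by
      have := (List.length_take (i := b+1) (l := l)) ▸ hi
      omega
    have hlt : i < l.length := lt_of_lt_of_le hi' hb
    have := auxSortedGetElemLe h (Nat.lt_succ_iff.mp hi') hb
    simp only [decide_eq_true_eq, not_lt]
    exact this
  have h1 : (l.drop (b+1)).countP (fun x => decide (l[b] < x)) ≤ l.length - (b+1) := by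
    calc (l.drop (b+1)).countP _ ≤ (l.drop (b+1)).length := List.countP_le_length
    _ = l.length - (b+1) := List.length_drop
  omega

private lemma auxKey (A B : List ℕ) (M : List (ℕ × ℕ))
    (h1 : ∀ p ∈ M, p.1 < p.2)
    (hA : (M.map Prod.fst).Sublist A)
    (hB : (M.map Prod.snd).Sublist B)
    (a b : ℕ) (ha : a < A.length) (hb : b < B.length)
    (hcard : B.length + a ≤ M.length + b) :
    (A.mergeSort (fun x y => decide (x ≤ y))).getD a 0 <
      (B.mergeSort (fun x y => decide (x ≤ y))).getD b 0 := by
  have hlenA : (A.mergeSort (fun x y => decide (x ≤ y))).length = A.length :=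
    List.length_mergeSort A
  have hlenB : (B.mergeSort (fun x y => decide (x ≤ y))).length = B.length :=
    List.length_mergeSort B
  rw [List.getD_eq_getElem _ _ (by omega), List.getD_eq_getElem _ _ (by omega)]
  set SA := A.mergeSort (fun x y => decide (x ≤ y)) with hSAdef
  set SB := B.mergeSort (fun x y => decide (x ≤ y)) with hSBdef
  have hsA : SA.Pairwise (· ≤ ·) := auxMergeSortSorted A
  have hsB : SB.Pairwise (· ≤ ·) := auxMergeSortSorted B
  set v := SB[b]'(by omega) with hv
  -- count of elements > v in B
  have h2 : SB.countP (fun x => decide (v < x)) + b + 1 ≤ B.length := by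
    have h2' : SB.countP (fun x => decide (v < x)) + b + 1 ≤ SB.length := by
      rw [hv]; exact auxCountGt hsB (by omega)
    omega
  have h3 : B.countP (fun x => decide (v < x)) = SB.countP (fun x => decide (v < x)) :=
    ((List.mergeSort_perm B _).countP_eq _).symm
  have h4 : (M.map Prod.snd).countP (fun x => decide (v < x)) ≤
      B.countP (fun x => decide (v < x)) := hB.countP_le
  have h5 : M.countP (fun p => decide (v < p.2)) =
      (M.map Prod.snd).countP (fun x => decide (v < x)) := by
    rw [List.countP_map]; rfl
  set M' := M.filter (fun p => decide (p.2 ≤ v)) with hM'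
  have h6 : M'.length + M.countP (fun p => decide (v < p.2)) = M.length := by
    have hperm := (List.filter_append_perm (fun p : ℕ × ℕ => decide (p.2 ≤ v)) M).length_eq
    rw [List.length_append] at hperm
    have : M.filter (fun p => !(decide (p.2 ≤ v))) = M.filter (fun p => decide (v < p.2)) := by
      congr 1; funext p
      rw [← decide_not, decide_eq_decide]
      omega
    rw [this] at hperm
    rw [hM', ← hperm, ← List.countP_eq_length_filter, ← List.countP_eq_length_filter]
  have h7 : a + 1 ≤ M'.length := by omega
  have h8 : ∀ x ∈ M'.map Prod.fst, x < v := by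
    intro x hx
    obtain ⟨p, hp, rfl⟩ := List.mem_map.mp hx
    have hp1 := List.mem_filter.mp hp
    have := h1 p hp1.1
    have h2v : p.2 ≤ v := by simpa using hp1.2
    omega
  have h9 : (M'.map Prod.fst).Sublist A := ((M.filter_sublist).map _).trans hA
  have h10 : a + 1 ≤ A.countP (fun x => decide (x < v)) := by
    have heq : (M'.map Prod.fst).countP (fun x => decide (x < v)) = (M'.map Prod.fst).length :=
      List.countP_eq_length.mpr (fun x hx => by simpa using h8 x hx)
    have := h9.countP_le (p := fun x => decide (x < v))
    rw [heq] at this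
    rw [List.length_map] at this
    omega
  have h11 : A.countP (fun x => decide (x < v)) = SA.countP (fun x => decide (x < v)) :=
    ((List.mergeSort_perm A _).countP_eq _).symm
  exact auxCountLt hsA (show a < SA.length by omega) (by omega)


private lemma auxMapRange' (s m : ℕ) (row : List ℕ) (hlen : row.length = m) :
    (List.range' s m).map (fun c => row.getD (c - s) 0) = row := by
  apply List.ext_getElem
  · simp [hlen]
  · intro t h1 h2
    simp only [List.getElem_map, List.getElem_range']
    rw [show s + 1 * t - s = t by omega]
    exact List.getD_eq_getElem _ _ h2

private lemma auxRange'Sublist {s s' m m' : ℕ} (h1 : s' ≤ s) (h2 : s + m ≤ s' + m') :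
    (List.range' s m).Sublist (List.range' s' m') := by
  have e1 : List.range' s' m' = List.range' s' (s - s') ++ List.range' s (m' - (s - s')) := by
    have := List.range'_append (s := s') (m := s - s') (n := m' - (s - s')) (step := 1)
    rw [show s' + 1 * (s - s') = s by omega] at this
    rw [show s - s' + (m' - (s - s')) = m' by omega] at this
    exact this.symm
  have e2 : List.range' s (m' - (s - s')) =
      List.range' s m ++ List.range' (s + m) ((m' - (s - s')) - m) := by
    have := List.range'_append (s := s) (m := m) (n := (m' - (s - s')) - m) (step := 1)
    rw [show s + 1 * m = s + m by omega] at this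
    rw [show m + ((m' - (s - s')) - m) = m' - (s - s') by omega] at this
    exact this.symm
  rw [e1, e2]
  exact ((List.sublist_append_left _ _).trans (List.sublist_append_right _ _))

private lemma auxSkewTabExt {n : ℕ} {T1 T2 : SkewTab n} (h1 : T1.inner = T2.inner)
    (h2 : T1.row = T2.row) : T1 = T2 := by
  cases T1; cases T2; simp_all

/-- If `μ/ν` sits inside `κ/λ` then every SSYT `T` of shape `κ/λ`
factors as `T = T' ⊠ T''` with `T'` an SSYT of shape `μ/ν` and `T''` an SSYT of shape
`(κ−μ)/(λ−ν)`. -/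
theorem decompose_of_sitsInside (n : ℕ) (kappa lam mu nu : ℕ → ℕ)
    (hk : IsPartition kappa) (hl : IsPartition lam)
    (hm : IsPartition mu) (hn : IsPartition nu)
    (hlk : ∀ i, lam i ≤ kappa i) (hnm : ∀ i, nu i ≤ mu i)
    (hsit : SitsInside mu nu kappa lam)
    (T : SkewTab n) (hT : T.IsSSYT) (hTi : T.inner = lam) (hTo : T.outer = kappa) :
    ∃ T' T'' : SkewTab n,
      T'.IsSSYT ∧ T'.inner = nu ∧ T'.outer = mu ∧
      T''.IsSSYT ∧ T''.inner = (fun i => lam i - nu i) ∧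
      T''.outer = (fun i => kappa i - mu i) ∧
      T = T'.ins T'' := by
  classical
  obtain ⟨f, hfinj, hf⟩ := hsit
  -- monotonicity of shapes
  have hkm : ∀ i, kappa (i+1) ≤ kappa i := fun i => hk.1 i (i+1) (Nat.le_succ i)
  have hlm : ∀ i, lam (i+1) ≤ lam i := fun i => hl.1 i (i+1) (Nat.le_succ i)
  have hmm : ∀ i, mu (i+1) ≤ mu i := fun i => hm.1 i (i+1) (Nat.le_succ i)
  have hnmo : ∀ i, nu (i+1) ≤ nu i := fun i => hn.1 i (i+1) (Nat.le_succ i)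
  -- basic facts about f
  have hf1 : ∀ i j, j < nu i → f j < lam i := fun i j h => (hf j i).2.mp h
  have hf1' : ∀ i j, f j < lam i → j < nu i := fun i j h => (hf j i).2.mpr h
  have hf2 : ∀ i j, nu i ≤ j → j < mu i → lam i ≤ f j ∧ f j < kappa i :=
    fun i j h1 h2 => (hf j i).1.mp ⟨h1, h2⟩
  have hfk : ∀ i j, j < mu i → f j < kappa i := by
    intro i j hj
    rcases lt_or_ge j (nu i) with h | h
    · exact lt_of_lt_of_le (hf1 i j h) (hlk i)
    · exact (hf2 i j h hj).2
  have hfk' : ∀ i j, f j < kappa i → j < mu i := by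
    intro i j hj
    by_contra hcon
    push_neg at hcon
    have h1 : nu i ≤ j := le_trans (hnm i) hcon
    have h2 : ¬ (f j < lam i) := fun h => by have := hf1' i j h; omega
    push_neg at h2
    have := (hf j i).1.mpr ⟨h2, hj⟩
    omega
  -- counting finsets
  set Uset : ℕ → Finset ℕ :=
    fun i => (Finset.range (lam i)).filter (fun c => c ∉ (Finset.range (nu i)).image f)
    with hUdef
  set Wset : ℕ → Finset ℕ :=
    fun i => (Finset.range (kappa i)).filter (fun c => c ∉ (Finset.range (mu i)).image f)
    with hWdef
  have himgU : ∀ i, (Finset.range (nu i)).image f ⊆ Finset.range (lam i) := by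
    intro i c hc
    obtain ⟨j, hj, rfl⟩ := Finset.mem_image.mp hc
    exact Finset.mem_range.mpr (hf1 i j (Finset.mem_range.mp hj))
  have himgW : ∀ i, (Finset.range (mu i)).image f ⊆ Finset.range (kappa i) := by
    intro i c hc
    obtain ⟨j, hj, rfl⟩ := Finset.mem_image.mp hc
    exact Finset.mem_range.mpr (hfk i j (Finset.mem_range.mp hj))
  have hUcard : ∀ i, (Uset i).card = lam i - nu i := by
    intro i
    have e : Uset i = Finset.range (lam i) \ ((Finset.range (nu i)).image f) := by
      rw [Finset.sdiff_eq_filter]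
    rw [e, Finset.card_sdiff_of_subset (himgU i), Finset.card_range,
      Finset.card_image_of_injective _ hfinj, Finset.card_range]
  have hWcard : ∀ i, (Wset i).card = kappa i - mu i := by
    intro i
    have e : Wset i = Finset.range (kappa i) \ ((Finset.range (mu i)).image f) := by
      rw [Finset.sdiff_eq_filter]
    rw [e, Finset.card_sdiff_of_subset (himgW i), Finset.card_range,
      Finset.card_image_of_injective _ hfinj, Finset.card_range]
  have hF1 : ∀ i, nu i ≤ lam i := by
    intro i
    have := Finset.card_le_card (himgU i)
    rwa [Finset.card_image_of_injective _ hfinj, Finset.card_range, Finset.card_range] at this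
  have hFk : ∀ i, mu i ≤ kappa i := by
    intro i
    have := Finset.card_le_card (himgW i)
    rwa [Finset.card_image_of_injective _ hfinj, Finset.card_range, Finset.card_range] at this
  have hF2 : ∀ i, mu i - nu i ≤ kappa i - lam i := by
    intro i
    have himg : (Finset.Ico (nu i) (mu i)).image f ⊆ Finset.Ico (lam i) (kappa i) := by
      intro c hc
      obtain ⟨j, hj, rfl⟩ := Finset.mem_image.mp hc
      obtain ⟨h1, h2⟩ := Finset.mem_Ico.mp hj
      exact Finset.mem_Ico.mpr (hf2 i j h1 h2)
    have := Finset.card_le_card himg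
    rwa [Finset.card_image_of_injective _ hfinj, Nat.card_Ico, Nat.card_Ico] at this
  have hUmono : ∀ i, Uset (i+1) ⊆ Uset i := by
    intro i c hc
    rw [hUdef, Finset.mem_filter, Finset.mem_range] at hc ⊢
    obtain ⟨hc1, hc2⟩ := hc
    refine ⟨lt_of_lt_of_le hc1 (hlm i), fun hmem => ?_⟩
    obtain ⟨j, hj, rfl⟩ := Finset.mem_image.mp hmem
    exact hc2 (Finset.mem_image.mpr ⟨j, Finset.mem_range.mpr (hf1' (i+1) j hc1), rfl⟩)
  have hWmono : ∀ i, Wset (i+1) ⊆ Wset i := by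
    intro i c hc
    rw [hWdef, Finset.mem_filter, Finset.mem_range] at hc ⊢
    obtain ⟨hc1, hc2⟩ := hc
    refine ⟨lt_of_lt_of_le hc1 (hkm i), fun hmem => ?_⟩
    obtain ⟨j, hj, rfl⟩ := Finset.mem_image.mp hmem
    exact hc2 (Finset.mem_image.mpr ⟨j, Finset.mem_range.mpr (hfk' (i+1) j hc1), rfl⟩)
  have hUmono' : ∀ i i', i ≤ i' → Uset i' ⊆ Uset i := by
    intro i i' h
    induction h with
    | refl => exact Finset.Subset.refl _
    | step h ih => exact fun c hc => ih (hUmono _ hc)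
  have hWmono' : ∀ i i', i ≤ i' → Wset i' ⊆ Wset i := by
    intro i i' h
    induction h with
    | refl => exact Finset.Subset.refl _
    | step h ih => exact fun c hc => ih (hWmono _ hc)
  have hPln : IsPartition (fun i => lam i - nu i) := by
    constructor
    · intro i j hij
      have := Finset.card_le_card (hUmono' i j hij)
      rwa [hUcard, hUcard] at this
    · obtain ⟨N, hN⟩ := hl.2
      exact ⟨N, fun i hi => by simp [hN i hi]⟩
  have hPkm : IsPartition (fun i => kappa i - mu i) := by
    constructor
    · intro i j hij
      have := Finset.card_le_card (hWmono' i j hij)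
      rwa [hWcard, hWcard] at this
    · obtain ⟨N, hN⟩ := hk.2
      exact ⟨N, fun i hi => by simp [hN i hi]⟩
  -- facts about T
  have hrowlen : ∀ i, (T.row i).length = kappa i - lam i := by
    intro i
    have h1 := congrFun hTo i
    have h2 := congrFun hTi i
    simp only [SkewTab.outer] at h1
    omega
  have hentry : ∀ i c, lam i ≤ c → c < kappa i → T.entry i c ∈ T.row i := by
    intro i c h1 h2
    simp only [SkewTab.entry, congrFun hTi i]
    rw [List.getD_eq_getElem _ _ (by rw [hrowlen i]; omega)]
    exact List.getElem_mem _
  have hstrict : ∀ i c, lam i ≤ c → c < kappa i → lam (i+1) ≤ c → c < kappa (i+1) →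
      T.entry i c < T.entry (i+1) c := by
    intro i c h1 h2 h3 h4
    exact hT.2.2.2.2 i c (by rw [hTi]; exact h1) (by rw [hTo]; exact h2)
      (by rw [hTi]; exact h3) (by rw [hTo]; exact h4)
  -- the lists
  set S : ℕ → List ℕ := fun i => (List.range' (nu i) (mu i - nu i)).map f with hSdef
  set R : ℕ → List ℕ := fun i => List.range' (lam i) (kappa i - lam i) with hRdef
  set A1 : ℕ → List ℕ :=
    fun i => (List.range' (nu i) (mu i - nu i)).map (fun j => T.entry i (f j)) with hA1def
  set A2 : ℕ → List ℕ :=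
    fun i => ((R i).filter (fun c => !decide (c ∈ S i))).map (T.entry i) with hA2def
  have hA1len : ∀ i, (A1 i).length = mu i - nu i := by
    intro i; rw [hA1def]; simp
  have hSmem : ∀ i c, c ∈ S i → lam i ≤ c ∧ c < kappa i := by
    intro i c hc
    rw [hSdef] at hc
    obtain ⟨j, hj, rfl⟩ := List.mem_map.mp hc
    rw [List.mem_range'_1] at hj
    exact hf2 i j hj.1 (by have := hnm i; omega)
  have hSnodup : ∀ i, (S i).Nodup := by
    intro i; rw [hSdef]
    exact (List.nodup_range').map hfinj
  have hRnodup : ∀ i, (R i).Nodup := fun i => List.nodup_range'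
  have hfilterperm : ∀ i, ((R i).filter (fun c => decide (c ∈ S i))).Perm (S i) := by
    intro i
    apply List.perm_of_nodup_nodup_toFinset_eq ((hRnodup i).filter _) (hSnodup i)
    ext c
    simp only [List.mem_toFinset, List.mem_filter, decide_eq_true_eq]
    constructor
    · exact fun h => h.2
    · intro h
      refine ⟨?_, h⟩
      have := hSmem i c h
      rw [hRdef, List.mem_range'_1]
      have := hlk i
      omega
  have hA2len : ∀ i, (A2 i).length + (mu i - nu i) = kappa i - lam i := by
    intro i
    have hperm := (List.filter_append_perm (fun c => decide (c ∈ S i)) (R i)).length_eq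
    rw [List.length_append] at hperm
    have h1 : ((R i).filter (fun c => decide (c ∈ S i))).length = mu i - nu i := by
      rw [(hfilterperm i).length_eq, hSdef]; simp
    have h2 : (R i).length = kappa i - lam i := by rw [hRdef]; simp
    have h3 : (A2 i).length = ((R i).filter (fun c => !decide (c ∈ S i))).length := by
      rw [hA2def]; simp
    omega
  have hentryfun : ∀ i, T.entry i = fun c => (T.row i).getD (c - lam i) 0 := by
    intro i; funext c; simp [SkewTab.entry, hTi]
  have hrowmap : ∀ i, (R i).map (T.entry i) = T.row i := by
    intro i
    simp only [hRdef, hentryfun i]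
    exact auxMapRange' _ _ _ (hrowlen i)
  -- the two tableaux
  set T1 : SkewTab n := ⟨nu, fun i => (A1 i).mergeSort (fun a b => decide (a ≤ b))⟩ with hT1def
  set T2 : SkewTab n := ⟨fun i => lam i - nu i,
    fun i => (A2 i).mergeSort (fun a b => decide (a ≤ b))⟩ with hT2def
  have hT1outer : T1.outer = mu := by
    funext i
    simp only [SkewTab.outer, hT1def, List.length_mergeSort, hA1len i]
    have := hnm i; omega
  have hT2outer : T2.outer = fun i => kappa i - mu i := by
    funext i
    simp only [SkewTab.outer, hT2def, List.length_mergeSort]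
    have h1 := hA2len i
    have := hnm i; have := hlk i; have := hF1 i; have := hF2 i; have := hFk i
    omega
  -- entry bounds
  have hmem1 : ∀ i x, x ∈ A1 i → 1 ≤ x ∧ x ≤ n := by
    intro i x hx
    rw [hA1def] at hx
    obtain ⟨j, hj, rfl⟩ := List.mem_map.mp hx
    rw [List.mem_range'_1] at hj
    have h2 := hf2 i j hj.1 (by have := hnm i; omega)
    exact hT.2.2.2.1 i _ (hentry i (f j) h2.1 h2.2)
  have hmem2 : ∀ i x, x ∈ A2 i → 1 ≤ x ∧ x ≤ n := by
    intro i x hx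
    rw [hA2def] at hx
    obtain ⟨c, hc, rfl⟩ := List.mem_map.mp hx
    have hcR : c ∈ R i := (List.mem_filter.mp hc).1
    rw [hRdef, List.mem_range'_1] at hcR
    have := hlk i
    exact hT.2.2.2.1 i _ (hentry i c hcR.1 (by omega))
  -- combined rows perm
  have hA1S : ∀ i, A1 i = (S i).map (T.entry i) := by
    intro i; rw [hA1def, hSdef, List.map_map]; rfl
  have hrowsperm : ∀ i, ((A1 i).mergeSort (fun a b => decide (a ≤ b)) ++
      (A2 i).mergeSort (fun a b => decide (a ≤ b))).Perm (T.row i) := by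
    intro i
    have p1 : (A1 i).Perm (((R i).filter (fun c => decide (c ∈ S i))).map (T.entry i)) := by
      rw [hA1S i]; exact ((hfilterperm i).map _).symm
    have p2 := List.filter_append_perm (fun c => decide (c ∈ S i)) (R i)
    refine ((List.mergeSort_perm _ _).append (List.mergeSort_perm _ _)).trans ?_
    refine ((p1.append_right _).trans ?_)
    have e : ((R i).filter (fun c => decide (c ∈ S i))).map (T.entry i) ++ A2 i =
        (((R i).filter (fun c => decide (c ∈ S i))) ++
          ((R i).filter (fun c => !decide (c ∈ S i)))).map (T.entry i) := by
      rw [hA2def, List.map_append]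
    rw [e, ← hrowmap i]
    exact p2.map _
  -- T = T1.ins T2
  have hins : T = T1.ins T2 := by
    apply auxSkewTabExt
    · funext i
      show T.inner i = nu i + (lam i - nu i)
      rw [hTi]
      have := hF1 i; omega
    · funext i
      show T.row i = ((A1 i).mergeSort (fun a b => decide (a ≤ b)) ++
        (A2 i).mergeSort (fun a b => decide (a ≤ b))).mergeSort (fun a b => decide (a ≤ b))
      symm
      exact List.Perm.eq_of_pairwise' (auxMergeSortSorted _) (hT.2.2.1 i)
        ((List.mergeSort_perm _ _).trans (hrowsperm i))
  -- T1 is SSYT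
  have hT1ssyt : T1.IsSSYT := by
    refine ⟨hn, ?_, ?_, ?_, ?_⟩
    · rw [hT1outer]; exact hm
    · intro i; exact auxMergeSortSorted _
    · intro i x hx
      exact hmem1 i x (List.mem_mergeSort.mp hx)
    · intro i j hj1 hj2 hj3 hj4
      have hj1' : nu i ≤ j := hj1
      have hj3' : nu (i+1) ≤ j := hj3
      rw [hT1outer] at hj2 hj4
      show ((A1 i).mergeSort (fun a b => decide (a ≤ b))).getD (j - nu i) 0 <
        ((A1 (i+1)).mergeSort (fun a b => decide (a ≤ b))).getD (j - nu (i+1)) 0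
      refine auxKey (A1 i) (A1 (i+1))
        ((List.range' (nu i) (mu (i+1) - nu i)).map
          (fun j' => (T.entry i (f j'), T.entry (i+1) (f j'))))
        ?_ ?_ ?_ (j - nu i) (j - nu (i+1)) ?_ ?_ ?_
      · intro p hp
        obtain ⟨j', hj', rfl⟩ := List.mem_map.mp hp
        rw [List.mem_range'_1] at hj'
        have hj'2 : j' < mu (i+1) := by omega
        have c1 := hf2 i j' hj'.1 (lt_of_lt_of_le hj'2 (hmm i))
        have c2 := hf2 (i+1) j' (le_trans (hnmo i) hj'.1) hj'2
        exact hstrict i (f j') c1.1 c1.2 c2.1 c2.2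
      · rw [List.map_map]
        simp only [hA1def]
        exact List.Sublist.map _ (auxRange'Sublist (le_refl _) (by have := hmm i; omega))
      · rw [List.map_map]
        simp only [hA1def]
        exact List.Sublist.map _
          (auxRange'Sublist (hnmo i) (by have := hnm (i+1); have := hnmo i; omega))
      · rw [hA1len i]; omega
      · rw [hA1len (i+1)]; omega
      · simp only [hA1len, List.length_map, List.length_range']
        have := hnmo i; omega
  -- T2 is SSYT
  have hT2ssyt : T2.IsSSYT := by
    refine ⟨hPln, ?_, ?_, ?_, ?_⟩
    · rw [hT2outer]; exact hPkm
    · intro i; exact auxMergeSortSorted _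
    · intro i x hx
      exact hmem2 i x (List.mem_mergeSort.mp hx)
    · intro i j hj1 hj2 hj3 hj4
      have hj1' : lam i - nu i ≤ j := hj1
      have hj3' : lam (i+1) - nu (i+1) ≤ j := hj3
      simp only [hT2outer] at hj2 hj4
      set RB : List ℕ := List.range' (lam i) (kappa (i+1) - lam i) with hRBdef
      set C : List ℕ := (RB.filter (fun c => !decide (c ∈ S i))).filter
        (fun c => !decide (c ∈ S (i+1))) with hCdef
      have hCmem : ∀ c ∈ C, lam i ≤ c ∧ c < kappa (i+1) := by
        intro c hc
        obtain ⟨hcR, hp2⟩ := List.mem_filter.mp hc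
        obtain ⟨hcR', hp1⟩ := List.mem_filter.mp hcR
        rw [hRBdef, List.mem_range'_1] at hcR'
        exact ⟨hcR'.1, by omega⟩
      have hCnodup : C.Nodup :=
        List.Nodup.filter _ (List.Nodup.filter _ (List.nodup_range'))
      have hWUC : Wset (i+1) ⊆ Uset i ∪ C.toFinset := by
        intro c hc
        rw [hWdef, Finset.mem_filter, Finset.mem_range] at hc
        obtain ⟨hc1, hc2⟩ := hc
        rcases lt_or_ge c (lam i) with hcase | hcase
        · apply Finset.mem_union_left
          rw [hUdef, Finset.mem_filter, Finset.mem_range]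
          refine ⟨hcase, fun hmem => ?_⟩
          obtain ⟨j', hj', rfl⟩ := Finset.mem_image.mp hmem
          exact hc2 (Finset.mem_image.mpr
            ⟨j', Finset.mem_range.mpr (hfk' (i+1) j' hc1), rfl⟩)
        · apply Finset.mem_union_right
          rw [List.mem_toFinset, hCdef]
          have hnotS1 : ¬ (c ∈ S i) := by
            intro hmem
            rw [hSdef] at hmem
            obtain ⟨j', hj', rfl⟩ := List.mem_map.mp hmem
            exact hc2 (Finset.mem_image.mpr
              ⟨j', Finset.mem_range.mpr (hfk' (i+1) j' hc1), rfl⟩)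
          have hnotS2 : ¬ (c ∈ S (i+1)) := by
            intro hmem
            rw [hSdef] at hmem
            obtain ⟨j', hj', rfl⟩ := List.mem_map.mp hmem
            rw [List.mem_range'_1] at hj'
            exact hc2 (Finset.mem_image.mpr
              ⟨j', Finset.mem_range.mpr (by have := hnm (i+1); omega), rfl⟩)
          refine List.mem_filter.mpr ⟨List.mem_filter.mpr ⟨?_, by simpa using hnotS1⟩,
            by simpa using hnotS2⟩
          rw [hRBdef, List.mem_range'_1]
          omega
      have hkeyineq : kappa (i+1) - mu (i+1) ≤ (lam i - nu i) + C.length := by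
        have h1 := Finset.card_le_card hWUC
        have h2 := Finset.card_union_le (Uset i) C.toFinset
        have h3 : C.toFinset.card = C.length := List.toFinset_card_of_nodup hCnodup
        rw [hWcard (i+1)] at h1
        rw [hUcard i] at h2
        omega
      show ((A2 i).mergeSort (fun a b => decide (a ≤ b))).getD (j - (lam i - nu i)) 0 <
        ((A2 (i+1)).mergeSort (fun a b => decide (a ≤ b))).getD (j - (lam (i+1) - nu (i+1))) 0
      refine auxKey (A2 i) (A2 (i+1))
        (C.map (fun c => (T.entry i c, T.entry (i+1) c)))
        ?_ ?_ ?_ (j - (lam i - nu i)) (j - (lam (i+1) - nu (i+1))) ?_ ?_ ?_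
      · intro p hp
        obtain ⟨c, hc, rfl⟩ := List.mem_map.mp hp
        have hb := hCmem c hc
        exact hstrict i c hb.1 (by have := hkm i; omega) (by have := hlm i; omega) hb.2
      · rw [List.map_map]
        simp only [hA2def]
        apply List.Sublist.map
        rw [hCdef]
        refine List.filter_sublist.trans (List.Sublist.filter _ ?_)
        simp only [hRBdef, hRdef]
        exact auxRange'Sublist (le_refl _) (by have := hkm i; omega)
      · rw [List.map_map]
        simp only [hA2def]
        apply List.Sublist.map
        have hswap : C = (RB.filter (fun c => !decide (c ∈ S (i+1)))).filter
            (fun c => !decide (c ∈ S i)) := by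
          rw [hCdef, List.filter_filter, List.filter_filter]
          congr 1
          funext c
          rw [Bool.and_comm]
        rw [hswap]
        refine List.filter_sublist.trans (List.Sublist.filter _ ?_)
        rcases le_or_gt (lam i) (kappa (i+1)) with hcase | hcase
        · simp only [hRBdef, hRdef]
          exact auxRange'Sublist (hlm i) (by have := hlk (i+1); omega)
        · have hnil : RB = [] := by
            rw [hRBdef, show kappa (i+1) - lam i = 0 by omega]
            rfl
          rw [hnil]
          exact List.nil_sublist _
      · have := hA2len i; have := hF1 i; have := hF2 i; have := hnm i
        have := hlk i; have := hFk i
        omega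
      · have := hA2len (i+1); have := hF1 (i+1); have := hF2 (i+1); have := hnm (i+1)
        have := hlk (i+1); have := hFk (i+1)
        omega
      · simp only [List.length_map]
        have := hA2len (i+1); have := hF1 i; have := hF1 (i+1); have := hnm (i+1)
        have := hlk (i+1); have := hF2 (i+1); have := hFk (i+1)
        have hmono := hPln.1 i (i+1) (Nat.le_succ i)
        simp only at hmono
        omega
  exact ⟨T1, T2, hT1ssyt, rfl, hT1outer, hT2ssyt, rfl, hT2outer, hins⟩
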